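/- arXiv:2107.04088 — 2 statements merged into one kernel-verified Lean document; each statement's English description precedes it below -/
import Mathlib

section
/- Let Q be a nonzero symmetric n×n real matrix satisfying Tr(Q)·Q − Q² ⪰ 0 (positive semidefinite). Then Q ⪰ 0 or Q ⪯ 0. -/
open Matrix in
/-- if a nonzero symmetric real matrix `Q` satisfies
`Tr(Q)·Q − Q² ⪰ 0`, then `Q ⪰ 0` or `Q ⪯ 0`. -/
theorem posSemidef_or_negSemidef_of_trace_smul_sub_sq_posSemidef
    {n : ℕ} (Q : Matrix (Fin n) (Fin n) ℝ) (hQsymm : Q.IsSymm) (hQne : Q ≠ 0)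
    (h : (Q.trace • Q - Q * Q).PosSemidef) :
    Q.PosSemidef ∨ (-Q).PosSemidef := by
  have hQ : Q.IsHermitian := by
    rw [Matrix.IsHermitian, Matrix.conjTranspose]
    ext i j; simpa using hQsymm.apply i j
  set T : ℝ := Q.trace with hT
  set lam : Fin n → ℝ := hQ.eigenvalues with hlam
  -- each eigenvalue satisfies λ (T - λ) ≥ 0
  have key : ∀ i, 0 ≤ lam i * (T - lam i) := by
    intro i
    set v : Fin n → ℝ := ⇑(hQ.eigenvectorBasis i) with hv
    have hQv : Q *ᵥ v = lam i • v := hQ.mulVec_eigenvectorBasis i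
    have hnorm : dotProduct (star v) v = 1 := by
      have := hQ.eigenvectorBasis.orthonormal.1 i
      have h2 : (inner ℝ (hQ.eigenvectorBasis i) (hQ.eigenvectorBasis i) : ℝ) = 1 := by
        rw [inner_self_eq_norm_sq_to_K, this]; norm_num
      rw [EuclideanSpace.inner_eq_star_dotProduct] at h2
      simpa using h2
    have hmv : (T • Q - Q * Q) *ᵥ v = (lam i * (T - lam i)) • v := by
      rw [Matrix.sub_mulVec, Matrix.smul_mulVec, hQv, ← Matrix.mulVec_mulVec, hQv,
        Matrix.mulVec_smul, hQv]
      ext j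
      simp [mul_comm, mul_sub]
      ring
    have := h.dotProduct_mulVec_nonneg v
    rw [hmv, dotProduct_smul, hnorm] at this
    simpa using this
  -- the trace is the sum of the eigenvalues
  have htr : T = ∑ i, lam i := by
    conv_lhs => rw [hT, hQ.spectral_theorem, Unitary.conjStarAlgAut_apply]
    rw [Matrix.trace_mul_comm, ← mul_assoc, Matrix.star_eq_conjTranspose]
    rw [show (hQ.eigenvectorUnitary : Matrix (Fin n) (Fin n) ℝ)ᴴ *
        (hQ.eigenvectorUnitary : Matrix (Fin n) (Fin n) ℝ) = 1 from
      Unitary.star_mul_self_of_mem hQ.eigenvectorUnitary.prop]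
    simp [Matrix.trace_diagonal, hlam]
  by_cases hall : ∀ i, 0 ≤ lam i
  · exact Or.inl (hQ.posSemidef_iff_eigenvalues_nonneg.mpr hall)
  · right
    push_neg at hall
    obtain ⟨i, hi⟩ := hall
    have hTneg : T ≤ lam i := by
      have := key i; nlinarith
    have hnonpos : ∀ j, lam j ≤ 0 := by
      intro j
      by_contra hj
      push_neg at hj
      have := key j
      nlinarith
    -- -Q = U * diagonal (-λ) * Uᴴ is PSD
    have hdecomp : -Q = (hQ.eigenvectorUnitary : Matrix (Fin n) (Fin n) ℝ) *
        Matrix.diagonal (fun j => -lam j) *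
        (hQ.eigenvectorUnitary : Matrix (Fin n) (Fin n) ℝ)ᴴ := by
      conv_lhs => rw [hQ.spectral_theorem, Unitary.conjStarAlgAut_apply]
      rw [Matrix.star_eq_conjTranspose,
        show Matrix.diagonal (fun j => -lam j)
            = -Matrix.diagonal (RCLike.ofReal ∘ hQ.eigenvalues) from by
          ext a b
          by_cases hab : a = b <;> simp [Matrix.diagonal, hab, hlam],
        Matrix.mul_neg, Matrix.neg_mul]
    rw [hdecomp]
    exact (Matrix.posSemidef_diagonal_iff.mpr
      (fun j => by simpa using hnonpos j)).mul_mul_conjTranspose_same _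
end

section
/- Let ν be a probability measure on symmetric n×n matrices of the form ν = Σ_{i=1}^N θ_i δ_{Q_i} + θ_0 μ, where θ_i ≥ 0, θ_0 = 1 − Σθ_i > 0, μ is a probability measure supported on {X symmetric : Tr(X) = p_0} with θ_0 p_0 = −Σ_{i=1}^N θ_i Tr(Q_i), the barycenter of ν is 0, and ∫ (Tr(X)X − X²) dν(X) = 0. Then Σ_{i=1}^N [θ_0 Tr(Q_i) + Σ_{j=1}^N θ_j Tr(Q_j)] θ_i Q_i ⪰ θ_0 Σ_{i=1}^N θ_i Q_i² + (Σ_{i=1}^N θ_i Q_i)². -/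
open MeasureTheory Matrix

instance matrixMeasurableSpace {d : ℕ} : MeasurableSpace (Matrix (Fin d) (Fin d) ℝ) :=
  inferInstanceAs (MeasurableSpace (Fin d → Fin d → ℝ))

instance matrixMeasurableSingletonClass {d : ℕ} :
    MeasurableSingletonClass (Matrix (Fin d) (Fin d) ℝ) :=
  inferInstanceAs (MeasurableSingletonClass (Fin d → Fin d → ℝ))

lemma quad_sum_sq {d : ℕ} (v : Fin d → ℝ) (M : Matrix (Fin d) (Fin d) ℝ)
    (hM : ∀ a b, M a b = M b a) :
    ∑ i, ∑ j, v i * v j * (M * M) i j = ∑ k, (∑ j, M k j * v j)^2 := by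
  have hR : ∀ k : Fin d, (∑ j, M k j * v j)^2 = ∑ i, ∑ j, (M k i * v i) * (M k j * v j) :=
    fun k => by rw [sq, Finset.sum_mul_sum]
  simp only [hR, Matrix.mul_apply, Finset.mul_sum]
  rw [show (∑ i : Fin d, ∑ j : Fin d, ∑ k : Fin d, v i * v j * (M i k * M k j))
      = ∑ i : Fin d, ∑ k : Fin d, ∑ j : Fin d, v i * v j * (M i k * M k j) from
    Finset.sum_congr rfl fun i _ => Finset.sum_comm, Finset.sum_comm]
  refine Finset.sum_congr rfl fun k _ => Finset.sum_congr rfl fun i _ =>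
    Finset.sum_congr rfl fun j _ => ?_
  rw [hM i k]
  ring

/-- for a Young-measure-type probability measure
`ν = Σ θ_i δ_{Q_i} + θ₀ μ` on symmetric matrices with zero barycenter,
`μ` supported on `{Tr X = p₀}` where `θ₀ p₀ = −Σ θ_i Tr Q_i`, and with vanishing
second moment of the null Lagrangian `Tr(X)X − X²`, the matrix inequality
`Σ_i [θ₀ Tr Q_i + Σ_j θ_j Tr Q_j] θ_i Q_i ⪰ θ₀ Σ_i θ_i Q_i² + (Σ_i θ_i Q_i)²` holds. -/
theorem sequential_E_inclusion_restriction
    {d N : ℕ} (μ : Measure (Matrix (Fin d) (Fin d) ℝ)) [IsProbabilityMeasure μ]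
    (θ : Fin N → ℝ) (θ₀ p₀ : ℝ)
    (hθ : ∀ i, 0 ≤ θ i) (hθ₀ : θ₀ = 1 - ∑ i, θ i) (hθ₀pos : 0 < θ₀)
    (Q : Fin N → Matrix (Fin d) (Fin d) ℝ) (hQsymm : ∀ i, (Q i).IsSymm)
    (hp₀ : θ₀ * p₀ = -∑ i, θ i * (Q i).trace)
    (hsupp : ∀ᵐ X ∂μ, X.IsSymm ∧ X.trace = p₀)
    (ν : Measure (Matrix (Fin d) (Fin d) ℝ))
    (hν : ν = (∑ i, ENNReal.ofReal (θ i) • Measure.dirac (Q i))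
        + ENNReal.ofReal θ₀ • μ)
    (hint1 : ∀ i j : Fin d, Integrable (fun X => X i j) ν)
    (hint2 : ∀ i j : Fin d, Integrable (fun X => (X * X) i j) ν)
    (hbary : ∀ i j : Fin d, ∫ X, X i j ∂ν = 0)
    (hnull : ∀ i j : Fin d, ∫ X, (X.trace * X i j - (X * X) i j) ∂ν = 0) :
    ((∑ i, ((θ₀ * (Q i).trace + ∑ j, θ j * (Q j).trace) * θ i) • Q i)
      - (θ₀ • ∑ i, θ i • (Q i * Q i) + (∑ i, θ i • Q i) * (∑ i, θ i • Q i))).PosSemidef := by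
  classical
  -- measurability of entries
  have hm1 : ∀ a b : Fin d, Measurable fun X : Matrix (Fin d) (Fin d) ℝ => X a b :=
    fun a b => (measurable_pi_apply b).comp (measurable_pi_apply a)
  have hmtr : Measurable fun X : Matrix (Fin d) (Fin d) ℝ => X.trace := by
    simp only [Matrix.trace, Matrix.diag]
    exact Finset.measurable_sum _ fun k _ => hm1 k k
  have hm2 : ∀ a b : Fin d, Measurable fun X : Matrix (Fin d) (Fin d) ℝ => (X * X) a b := by
    intro a b
    simp only [Matrix.mul_apply]
    exact Finset.measurable_sum _ fun k _ => (hm1 a k).mul (hm1 k b)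
  -- transfer of integrability from ν to μ
  have hθ₀ne : ENNReal.ofReal θ₀ ≠ 0 := by
    simp only [ne_eq, ENNReal.ofReal_eq_zero, not_le]
    exact hθ₀pos
  have hμof : ∀ f : Matrix (Fin d) (Fin d) ℝ → ℝ, Integrable f ν → Integrable f μ := by
    intro f hf
    rw [hν] at hf
    exact (integrable_smul_measure hθ₀ne ENNReal.ofReal_ne_top).mp
      (hf.mono_measure (Measure.le_add_left le_rfl))
  have hint1μ : ∀ a b : Fin d, Integrable (fun X => X a b) μ := fun a b => hμof _ (hint1 a b)
  have hint2μ : ∀ a b : Fin d, Integrable (fun X => (X * X) a b) μ := fun a b => hμof _ (hint2 a b)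
  -- decomposition of integrals over ν
  have hdec : ∀ f : Matrix (Fin d) (Fin d) ℝ → ℝ, Measurable f → Integrable f μ →
      ∫ X, f X ∂ν = (∑ i, θ i * f (Q i)) + θ₀ * ∫ X, f X ∂μ := by
    intro f hfm hfi
    have hdir : ∀ i : Fin N, Integrable f (ENNReal.ofReal (θ i) • Measure.dirac (Q i)) := by
      intro i
      refine Integrable.smul_measure ⟨hfm.aestronglyMeasurable, ?_⟩ ENNReal.ofReal_ne_top
      rw [HasFiniteIntegral, lintegral_dirac]
      exact ENNReal.coe_lt_top
    have hsum : Integrable f (∑ i, ENNReal.ofReal (θ i) • Measure.dirac (Q i)) :=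
      integrable_finset_sum_measure.mpr fun i _ => hdir i
    have hsm : Integrable f (ENNReal.ofReal θ₀ • μ) := hfi.smul_measure ENNReal.ofReal_ne_top
    rw [hν, integral_add_measure hsum hsm, integral_finset_sum_measure fun i _ => hdir i,
      integral_smul_measure, ENNReal.toReal_ofReal hθ₀pos.le, smul_eq_mul]
    congr 1
    refine Finset.sum_congr rfl fun i _ => ?_
    rw [integral_smul_measure, integral_dirac, ENNReal.toReal_ofReal (hθ i), smul_eq_mul]
  -- the barycenter matrices
  set A : Matrix (Fin d) (Fin d) ℝ := Matrix.of fun a b => ∫ X, X a b ∂μ with hAdef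
  set B : Matrix (Fin d) (Fin d) ℝ := Matrix.of fun a b => ∫ X, (X * X) a b ∂μ with hBdef
  have hAapp : ∀ a b, A a b = ∫ X, X a b ∂μ := fun a b => rfl
  have hBapp : ∀ a b, B a b = ∫ X, (X * X) a b ∂μ := fun a b => rfl
  -- barycenter condition
  have hE1 : ∀ a b, (∑ i, θ i * Q i a b) + θ₀ * A a b = 0 := by
    intro a b
    have h := hbary a b
    rwa [hdec _ (hm1 a b) (hint1μ a b)] at h
  have hS : ∀ a b, (∑ i, θ i * Q i a b) = -(θ₀ * A a b) := fun a b => by linarith [hE1 a b]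
  -- trace * entry over μ
  have htrae : ∀ a b : Fin d,
      (fun X : Matrix (Fin d) (Fin d) ℝ => p₀ * X a b) =ᵐ[μ] fun X => X.trace * X a b :=
    fun a b => hsupp.mono fun X hX => by simp only [hX.2]
  have htri : ∀ a b : Fin d, Integrable (fun X => X.trace * X a b) μ :=
    fun a b => ((hint1μ a b).const_mul p₀).congr (htrae a b)
  have htrint : ∀ a b : Fin d, ∫ X, X.trace * X a b ∂μ = p₀ * A a b := by
    intro a b
    rw [← integral_congr_ae (htrae a b), integral_const_mul, hAapp]
  -- null Lagrangian condition
  have hE2 : ∀ a b, (∑ i, θ i * ((Q i).trace * Q i a b - (Q i * Q i) a b))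
      + θ₀ * (p₀ * A a b - B a b) = 0 := by
    intro a b
    have h := hnull a b
    rwa [hdec (fun X => X.trace * X a b - (X * X) a b) ((hmtr.mul (hm1 a b)).sub (hm2 a b)) ((htri a b).sub (hint2μ a b)),
      integral_sub (htri a b) (hint2μ a b), htrint a b, ← hBapp] at h
  -- symmetry of A, B
  have hentry : ∀ X : Matrix (Fin d) (Fin d) ℝ, X.IsSymm → ∀ a b, X a b = X b a := by
    intro X hX a b
    conv_lhs => rw [← hX]
    exact Matrix.transpose_apply X a b
  have hAsymm : ∀ a b, A a b = A b a := by
    intro a b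
    rw [hAapp, hAapp]
    exact integral_congr_ae (hsupp.mono fun X hX => hentry X hX.1 a b)
  have hBsymm : ∀ a b, B a b = B b a := by
    intro a b
    rw [hBapp, hBapp]
    refine integral_congr_ae (hsupp.mono fun X hX => ?_)
    simp only [Matrix.mul_apply]
    refine Finset.sum_congr rfl fun k _ => ?_
    rw [hentry X hX.1 a k, hentry X hX.1 k b]
    ring
  have hAAsymm : ∀ a b, (A * A) a b = (A * A) b a := by
    intro a b
    simp only [Matrix.mul_apply]
    refine Finset.sum_congr rfl fun k _ => ?_
    rw [hAsymm a k, hAsymm k b]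
    ring
  -- Jensen inequality
  have hJ : ∀ v : Fin d → ℝ,
      ∑ a, ∑ b, v a * v b * (A * A) a b ≤ ∑ a, ∑ b, v a * v b * B a b := by
    intro v
    set f : Fin d → Matrix (Fin d) (Fin d) ℝ → ℝ := fun k X => ∑ j, X k j * v j with hfdef
    have hfm : ∀ k, Measurable (f k) :=
      fun k => Finset.measurable_sum _ fun j _ => (hm1 k j).mul_const _
    have hfi : ∀ k, Integrable (f k) μ :=
      fun k => integrable_finset_sum _ fun j _ => (hint1μ k j).mul_const _
    have hck : ∀ k, ∫ X, f k X ∂μ = ∑ j, A k j * v j := by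
      intro k
      rw [integral_finset_sum _ fun j _ => (hint1μ k j).mul_const _]
      exact Finset.sum_congr rfl fun j _ => by rw [integral_mul_const, hAapp]
    have hsum_eq : (fun X : Matrix (Fin d) (Fin d) ℝ => ∑ i, ∑ j, v i * v j * (X * X) i j)
        =ᵐ[μ] fun X => ∑ k, (f k X)^2 :=
      hsupp.mono fun X hX => quad_sum_sq v X (hentry X hX.1)
    have hgint : Integrable (fun X : Matrix (Fin d) (Fin d) ℝ =>
        ∑ i, ∑ j, v i * v j * (X * X) i j) μ :=
      integrable_finset_sum _ fun i _ => integrable_finset_sum _ fun j _ =>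
        (hint2μ i j).const_mul _
    have hsqint : Integrable (fun X => ∑ k, (f k X)^2) μ := hgint.congr hsum_eq
    have hfk2 : ∀ k, Integrable (fun X => (f k X)^2) μ := by
      intro k
      refine Integrable.mono' hsqint ((hfm k).pow_const 2).aestronglyMeasurable ?_
      refine Filter.Eventually.of_forall fun X => ?_
      rw [Real.norm_eq_abs, abs_of_nonneg (sq_nonneg _)]
      exact Finset.single_le_sum (fun i _ => sq_nonneg (f i X)) (Finset.mem_univ k)
    have hjen : ∀ k, (∑ j, A k j * v j)^2 ≤ ∫ X, (f k X)^2 ∂μ := by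
      intro k
      have h0 : 0 ≤ ∫ X, (f k X - ∑ j, A k j * v j)^2 ∂μ :=
        integral_nonneg fun X => sq_nonneg _
      have hexp : ∫ X, (f k X - ∑ j, A k j * v j)^2 ∂μ
          = (∫ X, (f k X)^2 ∂μ) - (∑ j, A k j * v j)^2 := by
        have heq : (fun X => (f k X - ∑ j, A k j * v j)^2)
            = fun X => ((f k X)^2 - (2 * (∑ j, A k j * v j)) * f k X)
              + (∑ j, A k j * v j)^2 := funext fun X => by ring
        have hia : Integrable
            (fun X => (f k X)^2 - (2 * (∑ j, A k j * v j)) * f k X) μ :=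
          (hfk2 k).sub ((hfi k).const_mul _)
        have hib : Integrable
            (fun X : Matrix (Fin d) (Fin d) ℝ => (2 * (∑ j, A k j * v j)) * f k X) μ :=
          (hfi k).const_mul _
        rw [heq, integral_add hia (integrable_const _),
          integral_sub (hfk2 k) hib, integral_const_mul, hck k,
          integral_const]
        simp only [probReal_univ, ENNReal.toReal_one, smul_eq_mul, one_mul]
        ring
      linarith
    have hBsum : ∫ X, ∑ k, (f k X)^2 ∂μ = ∑ a, ∑ b, v a * v b * B a b := by
      rw [← integral_congr_ae hsum_eq,
        integral_finset_sum _ (fun i _ => integrable_finset_sum _ fun j _ =>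
          (hint2μ i j).const_mul _)]
      refine Finset.sum_congr rfl fun i _ => ?_
      rw [integral_finset_sum _ fun j _ => (hint2μ i j).const_mul _]
      exact Finset.sum_congr rfl fun j _ => by rw [integral_const_mul, hBapp]
    calc ∑ a, ∑ b, v a * v b * (A * A) a b = ∑ k, (∑ j, A k j * v j)^2 :=
          quad_sum_sq v A hAsymm
      _ ≤ ∑ k, ∫ X, (f k X)^2 ∂μ := Finset.sum_le_sum fun k _ => hjen k
      _ = ∫ X, ∑ k, (f k X)^2 ∂μ := (integral_finset_sum _ fun k _ => hfk2 k).symm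
      _ = ∑ a, ∑ b, v a * v b * B a b := hBsum
  -- the key entrywise identity
  have hprod : ∀ a b, ((∑ i, θ i • Q i) * (∑ i, θ i • Q i)) a b = θ₀^2 * (A * A) a b := by
    intro a b
    rw [Matrix.mul_apply, Matrix.mul_apply, Finset.mul_sum]
    refine Finset.sum_congr rfl fun k _ => ?_
    have h1 : (∑ i, θ i • Q i) a k = -(θ₀ * A a k) := by
      rw [Matrix.sum_apply]
      simp only [Matrix.smul_apply, smul_eq_mul]
      exact hS a k
    have h2 : (∑ i, θ i • Q i) k b = -(θ₀ * A k b) := by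
      rw [Matrix.sum_apply]
      simp only [Matrix.smul_apply, smul_eq_mul]
      exact hS k b
    rw [h1, h2]
    ring
  have hTentry : ∀ a b,
      ((∑ i, ((θ₀ * (Q i).trace + ∑ j, θ j * (Q j).trace) * θ i) • Q i)
        - (θ₀ • ∑ i, θ i • (Q i * Q i) + (∑ i, θ i • Q i) * (∑ i, θ i • Q i))) a b
      = θ₀^2 * (B a b - (A * A) a b) := by
    intro a b
    rw [Matrix.sub_apply, Matrix.add_apply, hprod a b]
    simp only [Matrix.sum_apply, Matrix.smul_apply, smul_eq_mul]
    have hE2' := hE2 a b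
    have hS' := hS a b
    have hsplit : ∑ i, (θ₀ * (Q i).trace + ∑ j, θ j * (Q j).trace) * θ i * Q i a b
        = θ₀ * (∑ i, θ i * ((Q i).trace * Q i a b))
          + (∑ j, θ j * (Q j).trace) * ∑ i, θ i * Q i a b := by
      rw [Finset.mul_sum, Finset.mul_sum, ← Finset.sum_add_distrib]
      exact Finset.sum_congr rfl fun i _ => by ring
    have hsub : ∑ i, θ i * ((Q i).trace * Q i a b - (Q i * Q i) a b)
        = (∑ i, θ i * ((Q i).trace * Q i a b)) - ∑ i, θ i * (Q i * Q i) a b := by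
      rw [← Finset.sum_sub_distrib]
      exact Finset.sum_congr rfl fun i _ => by ring
    rw [hsub] at hE2'
    rw [hsplit]
    linear_combination θ₀ * hE2' + (∑ j, θ j * (Q j).trace) * hS' - (θ₀ * A a b) * hp₀
  -- conclude
  refine posSemidef_iff_dotProduct_mulVec.mpr ⟨?_, ?_⟩
  · -- Hermitian
    ext a b
    rw [Matrix.conjTranspose_apply, star_trivial, hTentry, hTentry, hBsymm, hAAsymm]
  · intro x
    have hstar : star x = x := funext fun i => star_trivial _
    rw [hstar]
    have key : x ⬝ᵥ (((∑ i, ((θ₀ * (Q i).trace + ∑ j, θ j * (Q j).trace) * θ i) • Q i)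
        - (θ₀ • ∑ i, θ i • (Q i * Q i)
          + (∑ i, θ i • Q i) * (∑ i, θ i • Q i))).mulVec x)
        = θ₀^2 * ((∑ a, ∑ b, x a * x b * B a b) - ∑ a, ∑ b, x a * x b * (A * A) a b) := by
      calc x ⬝ᵥ (((∑ i, ((θ₀ * (Q i).trace + ∑ j, θ j * (Q j).trace) * θ i) • Q i)
            - (θ₀ • ∑ i, θ i • (Q i * Q i)
              + (∑ i, θ i • Q i) * (∑ i, θ i • Q i))).mulVec x)
          = ∑ a, ∑ b, x a * (((∑ i, ((θ₀ * (Q i).trace + ∑ j, θ j * (Q j).trace) * θ i) • Q i)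
            - (θ₀ • ∑ i, θ i • (Q i * Q i)
              + (∑ i, θ i • Q i) * (∑ i, θ i • Q i))) a b * x b) := by
            simp [dotProduct, Matrix.mulVec, Finset.mul_sum]
        _ = ∑ a, ∑ b, (θ₀^2 * (x a * x b * B a b) - θ₀^2 * (x a * x b * (A * A) a b)) := by
            refine Finset.sum_congr rfl fun a _ => Finset.sum_congr rfl fun b _ => ?_
            rw [hTentry a b]
            ring
        _ = θ₀^2 * ((∑ a, ∑ b, x a * x b * B a b)
              - ∑ a, ∑ b, x a * x b * (A * A) a b) := by
            simp only [Finset.sum_sub_distrib, ← Finset.mul_sum]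
            ring
    rw [key]
    exact mul_nonneg (sq_nonneg θ₀) (sub_nonneg.mpr (hJ x))
end
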